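/- Let $p \ge 1$ and for $r > 0$ define $\mathcal{D}_p^*(r) = \{(i_1,\dots,i_p) \in \mathbb{N}^p : i_1 < i_2 < \cdots < i_p,\ i_1 i_2 \cdots i_p \le r\}$. Then as $r \to \infty$, the cardinality $|\mathcal{D}_p^*(r)|$ is asymptotically equivalent to $\frac{r (\log r)^{p-1}}{p!\,(p-1)!}$, i.e. $\lim_{r\to\infty} \frac{|\mathcal{D}_p^*(r)|\, p!\,(p-1)!}{r(\log r)^{p-1}} = 1$. -/

import Mathlib

open Finset Real Filter MeasureTheory intervalIntegral

namespace CardDstar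

open Classical in
/-- ordered tuples of positive integers with product ≤ N -/
noncomputable def D (p N : ℕ) : Finset (Fin p → ℕ) :=
  (Fintype.piFinset fun _ => Finset.Icc 1 N).filter fun i => ∏ j, i j ≤ N

lemma mem_D {p N : ℕ} {i : Fin p → ℕ} :
    i ∈ D p N ↔ (∀ j, 0 < i j) ∧ ∏ j, i j ≤ N := by
  simp only [D, Finset.mem_filter, Fintype.mem_piFinset, Finset.mem_Icc]
  constructor
  · rintro ⟨h1, h2⟩
    exact ⟨fun j => (h1 j).1, h2⟩
  · rintro ⟨h1, h2⟩
    refine ⟨fun j => ⟨h1 j, ?_⟩, h2⟩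
    exact le_trans (Finset.single_le_prod' (fun k _ => (h1 k)) (Finset.mem_univ j)) h2

lemma card_D_zero {N : ℕ} (hN : 1 ≤ N) : (D 0 N).card = 1 := by
  rw [Finset.card_eq_one]
  refine ⟨fun j => j.elim0, ?_⟩
  ext i
  simp only [Finset.mem_singleton, mem_D]
  constructor
  · intro _; ext j; exact j.elim0
  · rintro rfl; exact ⟨fun j => j.elim0, by simpa using hN⟩

lemma card_D_one {N : ℕ} : (D 1 N).card = N := by
  have : (D 1 N) = (Finset.Icc 1 N).image (fun m => fun _ : Fin 1 => m) := by
    ext i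
    simp only [mem_D, Finset.mem_image, Finset.mem_Icc]
    constructor
    · rintro ⟨h1, h2⟩
      exact ⟨i 0, ⟨h1 0, by simpa using h2⟩, by ext j; congr 1; exact Subsingleton.elim _ _⟩
    · rintro ⟨m, hm, rfl⟩
      exact ⟨fun _ => hm.1, by simpa using hm.2⟩
  rw [this, Finset.card_image_of_injective _ (fun a b h => by simpa using congrFun h 0)]
  simp

lemma card_D_succ (p N : ℕ) :
    (D (p + 1) N).card = ∑ m ∈ Finset.Icc 1 N, (D p (N / m)).card := by
  rw [Finset.card_eq_sum_card_fiberwise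
    (f := fun i : Fin (p+1) → ℕ => i (Fin.last p)) (t := Finset.Icc 1 N)]
  · refine Finset.sum_congr rfl fun m hm => ?_
    rw [Finset.mem_Icc] at hm
    apply Finset.card_nbij' (i := fun i => Fin.init i) (j := fun g => Fin.snoc g m)
    · intro i hi
      simp only [Finset.mem_coe, Finset.mem_filter, mem_D] at hi
      obtain ⟨⟨h1, h2⟩, h3⟩ := hi
      rw [Finset.mem_coe, mem_D]
      refine ⟨fun j => h1 _, ?_⟩
      rw [Nat.le_div_iff_mul_le hm.1]
      calc (∏ j, Fin.init i j) * m = ∏ j, i j := by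
            rw [Fin.prod_univ_castSucc]; simp [Fin.init, h3]
        _ ≤ N := h2
    · intro g hg
      rw [Finset.mem_coe, mem_D] at hg
      simp only [Finset.mem_coe, Finset.mem_filter, mem_D]
      refine ⟨⟨?_, ?_⟩, by simp⟩
      · intro j
        rcases Fin.eq_castSucc_or_eq_last j with ⟨k, rfl⟩ | rfl
        · simpa using hg.1 k
        · simpa using (show 0 < m by omega)
      · rw [Fin.prod_univ_castSucc]
        simp only [Fin.snoc_castSucc, Fin.snoc_last]
        calc (∏ j, g j) * m ≤ (N / m) * m := by
              exact Nat.mul_le_mul_right m hg.2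
          _ ≤ N := Nat.div_mul_le_self N m
    · intro i hi
      simp only [Finset.mem_coe, Finset.mem_filter] at hi
      rw [← hi.2]
      exact Fin.snoc_init_self i
    · intro g _
      simp
  · intro i hi
    rw [Finset.mem_coe, mem_D] at hi
    rw [Finset.mem_coe, Finset.mem_Icc]
    exact ⟨hi.1 _, le_trans (Finset.single_le_prod' (fun k _ => hi.1 k) (Finset.mem_univ _)) hi.2⟩

end CardDstar

namespace CardDstar

open Classical in
noncomputable def Dstrict (p N : ℕ) : Finset (Fin p → ℕ) :=
  (D p N).filter fun i => StrictMono i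

open Classical in
noncomputable def Dinj (p N : ℕ) : Finset (Fin p → ℕ) :=
  (D p N).filter fun i => Function.Injective i

lemma mem_D_comp_perm {p N : ℕ} {g : Fin p → ℕ} (hg : g ∈ D p N) (σ : Equiv.Perm (Fin p)) :
    g ∘ σ ∈ D p N := by
  rw [mem_D] at hg ⊢
  refine ⟨fun j => hg.1 _, ?_⟩
  rw [show ∏ j, (g ∘ σ) j = ∏ j, g j from Equiv.prod_comp σ g]
  exact hg.2

lemma card_Dinj (p N : ℕ) :
    (Dinj p N).card = p.factorial * (Dstrict p N).card := by
  classical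
  have key : ((Finset.univ : Finset (Equiv.Perm (Fin p))) ×ˢ Dstrict p N).card
      = (Dinj p N).card := by
    apply Finset.card_nbij' (i := fun x => x.2 ∘ (x.1.symm : Equiv.Perm (Fin p)))
      (j := fun g => (Tuple.sort g, g ∘ Tuple.sort g))
    · rintro ⟨σ, f⟩ hx
      simp only [Finset.mem_coe, Finset.mem_product, Dstrict, Finset.mem_filter] at hx
      obtain ⟨-, hfD, hfs⟩ := hx
      simp only [Finset.mem_coe, Dinj, Finset.mem_filter]
      exact ⟨mem_D_comp_perm hfD _, hfs.injective.comp σ.symm.injective⟩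
    · intro g hg
      simp only [Finset.mem_coe, Dinj, Finset.mem_filter] at hg
      simp only [Finset.mem_coe, Finset.mem_product, Finset.mem_univ, true_and, Dstrict, Finset.mem_filter]
      refine ⟨mem_D_comp_perm hg.1 _, ?_⟩
      exact (Tuple.monotone_sort g).strictMono_of_injective
        (hg.2.comp (Tuple.sort g).injective)
    · rintro ⟨σ, f⟩ hx
      simp only [Finset.mem_coe, Finset.mem_product, Dstrict, Finset.mem_filter] at hx
      obtain ⟨-, hfD, hfs⟩ := hx
      set g : Fin p → ℕ := f ∘ (σ.symm : Equiv.Perm (Fin p)) with hgdef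
      have hginj : Function.Injective g := hfs.injective.comp σ.symm.injective
      have hmono : Monotone (g ∘ σ) := by
        have : g ∘ σ = f := by ext k; simp [hgdef]
        rw [this]; exact hfs.monotone
      have huniq : g ∘ σ = g ∘ Tuple.sort g :=
        Tuple.unique_monotone hmono (Tuple.monotone_sort g)
      have hσ : (σ : Equiv.Perm (Fin p)) = Tuple.sort g :=
        Equiv.ext fun k => hginj (congrFun huniq k)
      have hf : g ∘ Tuple.sort g = f := by
        rw [← huniq]; ext k; simp [hgdef]
      simp only [Prod.mk.injEq]
      exact ⟨hσ.symm, hf⟩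
    · intro g _
      ext k
      simp
  rw [← key, Finset.card_product]
  congr 1
  · simp [Fintype.card_perm]

lemma card_not_injective_le (q N : ℕ) :
    ((D (q+1) N).filter fun i => ¬ Function.Injective i).card
      ≤ (q+1)^2 * (D q N).card := by
  classical
  have hsub : ((D (q+1) N).filter fun i => ¬ Function.Injective i)
      ⊆ (Finset.univ : Finset (Fin (q+1))).offDiag.biUnion
        (fun ab => (D (q+1) N).filter fun i => i ab.1 = i ab.2) := by
    intro i hi
    simp only [Finset.mem_filter] at hi
    obtain ⟨hiD, hni⟩ := hi
    rw [Function.not_injective_iff] at hni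
    obtain ⟨a, b, hab, hne⟩ := hni
    simp only [Finset.mem_biUnion]
    exact ⟨(a, b), by simp [Finset.mem_offDiag, hne], by simp [Finset.mem_filter, hiD, hab]⟩
  have hone : ∀ ab : Fin (q+1) × Fin (q+1), ab.1 ≠ ab.2 →
      ((D (q+1) N).filter fun i => i ab.1 = i ab.2).card ≤ (D q N).card := by
    rintro ⟨a, b⟩ hne
    apply Finset.card_le_card_of_injOn (fun i => i ∘ b.succAbove)
    · intro i hi
      simp only [Finset.mem_coe, Finset.mem_filter, mem_D] at hi
      obtain ⟨⟨h1, h2⟩, -⟩ := hi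
      rw [Finset.mem_coe, mem_D]
      refine ⟨fun k => h1 _, ?_⟩
      calc ∏ k, (i ∘ b.succAbove) k ≤ i b * ∏ k, i (b.succAbove k) :=
            Nat.le_mul_of_pos_left _ (h1 b)
        _ = ∏ j, i j := (Fin.prod_univ_succAbove i b).symm
        _ ≤ N := h2
    · intro i hi i' hi' heq
      simp only [Finset.mem_coe, Finset.mem_filter] at hi hi'
      have haux : ∀ j, j ≠ b → i j = i' j := by
        intro j hj
        obtain ⟨k, rfl⟩ := Fin.exists_succAbove_eq hj
        exact congrFun heq k
      funext j
      by_cases hj : j = b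
      · subst hj
        rw [← hi.2, ← hi'.2]
        exact haux a hne
      · exact haux j hj
  calc ((D (q+1) N).filter fun i => ¬ Function.Injective i).card
      ≤ ∑ ab ∈ (Finset.univ : Finset (Fin (q+1))).offDiag,
          ((D (q+1) N).filter fun i => i ab.1 = i ab.2).card :=
        le_trans (Finset.card_le_card hsub) (Finset.card_biUnion_le)
    _ ≤ ∑ ab ∈ (Finset.univ : Finset (Fin (q+1))).offDiag, (D q N).card := by
        apply Finset.sum_le_sum
        intro ab hab
        rw [Finset.mem_offDiag] at hab
        exact hone ab hab.2.2
    _ ≤ (q+1)^2 * (D q N).card := by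
        rw [Finset.sum_const, smul_eq_mul]
        apply Nat.mul_le_mul_right
        rw [Finset.offDiag_card]
        simp only [Finset.card_univ, Fintype.card_fin]
        calc (q+1)*(q+1) - (q+1) ≤ (q+1)*(q+1) := Nat.sub_le _ _
          _ = (q+1)^2 := (sq (q+1)).symm

end CardDstar

namespace CardDstar

lemma f_antitone (r : ℝ) (hr : 1 ≤ r) (q : ℕ) :
    AntitoneOn (fun t : ℝ => (Real.log r - Real.log t)^q / t) (Set.Icc 1 r) := by
  rintro a ⟨ha1, har⟩ b ⟨hb1, hbr⟩ hab
  have ha0 : 0 < a := lt_of_lt_of_le zero_lt_one ha1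
  have hnum : (Real.log r - Real.log b)^q ≤ (Real.log r - Real.log a)^q := by
    apply pow_le_pow_left₀
    · simp only [sub_nonneg]
      exact Real.log_le_log (lt_of_lt_of_le ha0 hab) hbr
    · have := Real.log_le_log ha0 hab
      linarith
  have hb0 : 0 < b := lt_of_lt_of_le ha0 hab
  have hann : 0 ≤ Real.log r - Real.log a := by
    have := Real.log_le_log ha0 har
    linarith
  dsimp only
  exact div_le_div₀ (pow_nonneg hann q) hnum ha0 hab

lemma f_nonneg (r : ℝ) (hr : 1 ≤ r) (q : ℕ) {t : ℝ} (ht : t ∈ Set.Icc (1:ℝ) r) :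
    0 ≤ (Real.log r - Real.log t)^q / t := by
  obtain ⟨ht1, htr⟩ := ht
  have h0 : 0 < t := lt_of_lt_of_le zero_lt_one ht1
  have : Real.log t ≤ Real.log r := Real.log_le_log h0 htr
  have : 0 ≤ (Real.log r - Real.log t) := by linarith
  positivity

lemma f_integrable (r : ℝ) (hr : 1 ≤ r) (q : ℕ) {a b : ℝ}
    (ha : 1 ≤ a) (hab : a ≤ b) (hb : b ≤ r) :
    IntervalIntegrable (fun t : ℝ => (Real.log r - Real.log t)^q / t) volume a b := by
  apply AntitoneOn.intervalIntegrable
  apply (f_antitone r hr q).mono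
  rw [Set.uIcc_of_le hab]
  exact Set.Icc_subset_Icc ha hb

lemma f_integral (r : ℝ) (hr : 1 ≤ r) (q : ℕ) :
    ∫ t in (1:ℝ)..r, (Real.log r - Real.log t)^q / t
      = (Real.log r)^(q+1) / (q+1) := by
  have hd : ∀ x ∈ Set.uIcc (1:ℝ) r, HasDerivAt
      (fun t : ℝ => -((Real.log r - Real.log t)^(q+1)) / (q+1))
      ((Real.log r - Real.log x)^q / x) x := by
    intro x hx
    rw [Set.uIcc_of_le hr] at hx
    have hx0 : x ≠ 0 := by
      have := hx.1; intro h; rw [h] at this; linarith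
    have h1 : HasDerivAt (fun t : ℝ => Real.log r - Real.log t) (-x⁻¹) x :=
      (Real.hasDerivAt_log hx0).const_sub _
    have h2 := ((h1.pow (q+1)).neg).div_const ((q:ℝ)+1)
    refine h2.congr_deriv ?_
    have hq : ((q:ℝ)+1) ≠ 0 := by positivity
    push_cast [Nat.add_sub_cancel]
    field_simp
  have := intervalIntegral.integral_eq_sub_of_hasDerivAt hd
    (f_integrable r hr q le_rfl hr le_rfl)
  rw [this]
  simp [Real.log_one]
  ring

lemma key_sum_bounds (q : ℕ) (r : ℝ) (hr : 1 ≤ r) :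
    (Real.log r)^(q+1)/(q+1)
      ≤ (∑ m ∈ Finset.Icc 1 ⌊r⌋₊, (Real.log r - Real.log m)^q / m)
    ∧ (∑ m ∈ Finset.Icc 1 ⌊r⌋₊, (Real.log r - Real.log m)^q / m)
        ≤ (Real.log r)^(q+1)/(q+1) + (Real.log r)^q := by
  set L := Real.log r with hL
  set M := ⌊r⌋₊ with hM
  set f : ℝ → ℝ := fun t => (L - Real.log t)^q / t with hf
  have hM1 : 1 ≤ M := Nat.le_floor (by exact_mod_cast hr)
  have hM1R : (1:ℝ) ≤ (M:ℝ) := by exact_mod_cast hM1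
  have hMr : (M:ℝ) ≤ r := Nat.floor_le (by linarith)
  have hrM1 : r ≤ (M:ℝ) + 1 := (Nat.lt_floor_add_one r).le
  have hAI : AntitoneOn f (Set.Icc (1:ℝ) (M:ℝ)) :=
    (f_antitone r hr q).mono (Set.Icc_subset_Icc le_rfl hMr)
  have hAI' : AntitoneOn f (Set.Icc ((1:ℕ):ℝ) ((M:ℕ):ℝ)) := by exact_mod_cast hAI
  have hIsplit : (∫ t in (1:ℝ)..(M:ℝ), f t) + (∫ t in (M:ℝ)..r, f t)
      = ∫ t in (1:ℝ)..r, f t :=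
    intervalIntegral.integral_add_adjacent_intervals
      (f_integrable r hr q le_rfl hM1R hMr) (f_integrable r hr q hM1R hMr le_rfl)
  have hsum : (∑ m ∈ Finset.Icc 1 M, f m)
      = (∑ m ∈ Finset.Ico 1 M, f m) + f M := by
    rw [← Finset.Ico_add_one_right_eq_Icc, Finset.sum_Ico_succ_top hM1]
  have htail_le : (∫ t in (M:ℝ)..r, f t) ≤ f M := by
    have h1 : (∫ t in (M:ℝ)..r, f t) ≤ ∫ _t in (M:ℝ)..r, f M := by
      apply intervalIntegral.integral_mono_on hMr
        (f_integrable r hr q hM1R hMr le_rfl) intervalIntegrable_const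
      intro x hx
      exact (f_antitone r hr q) ⟨hM1R, hMr⟩ ⟨le_trans hM1R hx.1, hx.2⟩ hx.1
    have h2 : (∫ _t in (M:ℝ)..r, f M) = (r - M) * f M := by
      simp [intervalIntegral.integral_const, smul_eq_mul, mul_div_assoc]
    have h3 : (r - (M:ℝ)) * f M ≤ 1 * f M := by
      apply mul_le_mul_of_nonneg_right (by linarith)
      exact f_nonneg r hr q ⟨hM1R, hMr⟩
    rw [h2] at h1
    linarith
  have htail_nonneg : 0 ≤ ∫ t in (M:ℝ)..r, f t := by
    apply intervalIntegral.integral_nonneg hMr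
    intro x hx
    exact f_nonneg r hr q ⟨le_trans hM1R hx.1, hx.2⟩
  have hIval : (∫ t in (1:ℝ)..r, f t) = L^(q+1)/(q+1) := f_integral r hr q
  constructor
  · -- lower bound
    have h1 : (∫ t in ((1:ℕ):ℝ)..((M:ℕ):ℝ), f t) ≤ ∑ m ∈ Finset.Ico 1 M, f m :=
      AntitoneOn.integral_le_sum_Ico hM1 hAI'
    have h2 : (∫ t in (1:ℝ)..(M:ℝ), f t) ≤ ∑ m ∈ Finset.Ico 1 M, f m := by
      exact_mod_cast h1
    calc L^(q+1)/(q+1) = (∫ t in (1:ℝ)..(M:ℝ), f t) + (∫ t in (M:ℝ)..r, f t) := by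
          rw [hIsplit, hIval]
      _ ≤ (∑ m ∈ Finset.Ico 1 M, f m) + f M := add_le_add h2 htail_le
      _ = ∑ m ∈ Finset.Icc 1 M, f m := hsum.symm
  · -- upper bound
    have hreidx : (∑ m ∈ Finset.Icc 1 M, f m)
        = f 1 + ∑ m ∈ Finset.Ico 1 M, f ((m:ℕ)+1 : ℕ) := by
      have himg : ∑ m ∈ Finset.Ico 1 M, f (((m+1 : ℕ)):ℝ)
          = ∑ m ∈ Finset.Ico 2 (M+1), f (m:ℝ) := by
        rw [show Finset.Ico 2 (M+1) = (Finset.Ico 1 M).image (· + 1) from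
          (Finset.image_add_right_Ico 1 M 1).symm]
        rw [Finset.sum_image (by intro x _ y _ h; dsimp only at h; omega)]
      rw [← Finset.Ico_add_one_right_eq_Icc, Finset.sum_eq_sum_Ico_succ_bot (by omega : 1 < M + 1)]
      rw [himg]
      norm_num
    have h1 : (∑ m ∈ Finset.Ico 1 M, f ((m:ℕ)+1 : ℕ)) ≤ ∫ t in ((1:ℕ):ℝ)..((M:ℕ):ℝ), f t :=
      AntitoneOn.sum_le_integral_Ico hM1 hAI'
    have h2 : (∫ t in (1:ℝ)..(M:ℝ), f t) ≤ L^(q+1)/(q+1) := by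
      rw [← hIval, ← hIsplit]
      linarith
    have hf1 : f 1 = L^q := by simp [hf]
    calc (∑ m ∈ Finset.Icc 1 M, f m) = f 1 + ∑ m ∈ Finset.Ico 1 M, f ((m:ℕ)+1 : ℕ) := hreidx
      _ ≤ L^q + L^(q+1)/(q+1) := by
          push_cast at h1 ⊢
          have := le_trans h1 h2
          linarith [hf1]
      _ = L^(q+1)/(q+1) + L^q := by ring

end CardDstar

namespace CardDstar

noncomputable def c (p : ℕ) (r : ℝ) : ℝ := ((D p ⌊r⌋₊).card : ℝ)

lemma c_nonneg (p : ℕ) (r : ℝ) : 0 ≤ c p r := Nat.cast_nonneg _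

lemma c_one (r : ℝ) : c 1 r = (⌊r⌋₊ : ℝ) := by
  rw [c, card_D_one]

lemma c_rec (p : ℕ) (r : ℝ) : c (p+1) r = ∑ m ∈ Finset.Icc 1 ⌊r⌋₊, c p (r / m) := by
  rw [c, card_D_succ]
  push_cast
  apply Finset.sum_congr rfl
  intro m hm
  rw [c, Nat.floor_div_natCast]

lemma mem_facts {r : ℝ} (hr : 1 ≤ r) {m : ℕ} (hm : m ∈ Finset.Icc 1 ⌊r⌋₊) :
    (0:ℝ) < m ∧ (m:ℝ) ≤ r ∧ 1 ≤ r / m ∧ Real.log (r/m) = Real.log r - Real.log m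
      ∧ Real.log (r/m) ≤ Real.log r ∧ 0 ≤ Real.log (r/m) := by
  rw [Finset.mem_Icc] at hm
  have hm0 : (0:ℝ) < m := by exact_mod_cast hm.1
  have hmr : (m:ℝ) ≤ r := le_trans (by exact_mod_cast hm.2) (Nat.floor_le (by linarith))
  have hdiv : 1 ≤ r / m := (one_le_div hm0).mpr hmr
  have hlogeq : Real.log (r/m) = Real.log r - Real.log m :=
    Real.log_div (by linarith) (ne_of_gt hm0)
  have hm1 : (1:ℝ) ≤ m := by exact_mod_cast hm.1
  have hlm : 0 ≤ Real.log m := Real.log_nonneg hm1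
  have hle : Real.log (r/m) ≤ Real.log r := by rw [hlogeq]; linarith
  exact ⟨hm0, hmr, hdiv, hlogeq, hle, Real.log_nonneg hdiv⟩

lemma harmonic_bounds (r : ℝ) (hr : 1 ≤ r) :
    Real.log r ≤ (∑ m ∈ Finset.Icc 1 ⌊r⌋₊, 1/(m:ℝ))
      ∧ (∑ m ∈ Finset.Icc 1 ⌊r⌋₊, 1/(m:ℝ)) ≤ 1 + Real.log r := by
  have h := key_sum_bounds 0 r hr
  simp only [pow_zero, pow_one, Nat.cast_zero, zero_add, div_one, one_div] at h ⊢
  constructor <;> [exact h.1; linarith [h.2]]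

lemma c_crude : ∀ (q : ℕ) (r : ℝ), 1 ≤ r → c (q+1) r ≤ r * (1 + Real.log r)^q := by
  intro q
  induction q with
  | zero =>
    intro r hr
    rw [c_one, pow_zero, mul_one]
    exact Nat.floor_le (by linarith)
  | succ q ih =>
    intro r hr
    have hL0 : 0 ≤ Real.log r := Real.log_nonneg hr
    rw [c_rec]
    calc ∑ m ∈ Finset.Icc 1 ⌊r⌋₊, c (q+1) (r/m)
        ≤ ∑ m ∈ Finset.Icc 1 ⌊r⌋₊, (r/m) * (1 + Real.log r)^q := by
          apply Finset.sum_le_sum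
          intro m hm
          obtain ⟨hm0, hmr, hdiv, hlogeq, hle, hnn⟩ := mem_facts hr hm
          calc c (q+1) (r/m) ≤ (r/m) * (1 + Real.log (r/m))^q := ih _ hdiv
            _ ≤ (r/m) * (1 + Real.log r)^q := by
                apply mul_le_mul_of_nonneg_left _ (by positivity)
                exact pow_le_pow_left₀ (by linarith) (by linarith) q
      _ = r * (1 + Real.log r)^q * (∑ m ∈ Finset.Icc 1 ⌊r⌋₊, 1/(m:ℝ)) := by
          rw [Finset.mul_sum]
          apply Finset.sum_congr rfl
          intro m hm
          ring
      _ ≤ r * (1 + Real.log r)^q * (1 + Real.log r) := by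
          apply mul_le_mul_of_nonneg_left (harmonic_bounds r hr).2 (by positivity)
      _ = r * (1 + Real.log r)^(q+1) := by ring

lemma est : ∀ q : ℕ, 1 ≤ q → ∃ C : ℝ, 0 < C ∧ ∀ r : ℝ, 1 ≤ r →
    |c (q+1) r - r * (Real.log r)^q / (q.factorial : ℝ)|
      ≤ C * r * (1 + Real.log r)^(q-1) := by
  intro q hq
  induction q, hq using Nat.le_induction with
  | base =>
    refine ⟨2, by norm_num, fun r hr => ?_⟩
    have hL0 : 0 ≤ Real.log r := Real.log_nonneg hr
    simp only [Nat.factorial_one, Nat.cast_one, div_one, Nat.sub_self, pow_zero, mul_one,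
      pow_one]
    rw [c_rec]
    have h1 : ∀ m ∈ Finset.Icc 1 ⌊r⌋₊, |c 1 (r/m) - r/m| ≤ 1 := by
      intro m hm
      obtain ⟨hm0, hmr, hdiv, -⟩ := mem_facts hr hm
      rw [c_one, abs_le]
      constructor
      · have := Nat.lt_floor_add_one (r/(m:ℝ))
        linarith
      · have := Nat.floor_le (le_trans zero_le_one hdiv)
        linarith
    have h2 : |(∑ m ∈ Finset.Icc 1 ⌊r⌋₊, r/(m:ℝ)) - r * Real.log r| ≤ r := by
      have hsum : (∑ m ∈ Finset.Icc 1 ⌊r⌋₊, r/(m:ℝ))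
          = r * ∑ m ∈ Finset.Icc 1 ⌊r⌋₊, 1/(m:ℝ) := by
        rw [Finset.mul_sum]; apply Finset.sum_congr rfl; intro m hm; ring
      obtain ⟨hlo, hhi⟩ := harmonic_bounds r hr
      rw [hsum, ← mul_sub, abs_mul, abs_of_nonneg (by linarith : (0:ℝ) ≤ r)]
      have : |(∑ m ∈ Finset.Icc 1 ⌊r⌋₊, 1/(m:ℝ)) - Real.log r| ≤ 1 := by
        rw [abs_le]; constructor <;> linarith
      calc r * |(∑ m ∈ Finset.Icc 1 ⌊r⌋₊, 1/(m:ℝ)) - Real.log r| ≤ r * 1 :=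
            mul_le_mul_of_nonneg_left this (by linarith)
        _ = r := mul_one r
    have hcard : ((Finset.Icc 1 ⌊r⌋₊).card : ℝ) ≤ r := by
      rw [Nat.card_Icc]
      simp only [Nat.add_sub_cancel]
      exact_mod_cast Nat.floor_le (by linarith : (0:ℝ) ≤ r)
    calc |(∑ m ∈ Finset.Icc 1 ⌊r⌋₊, c 1 (r/m)) - r * Real.log r|
        ≤ |∑ m ∈ Finset.Icc 1 ⌊r⌋₊, (c 1 (r/m) - r/m)|
          + |(∑ m ∈ Finset.Icc 1 ⌊r⌋₊, r/(m:ℝ)) - r * Real.log r| := by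
          rw [Finset.sum_sub_distrib]
          have := abs_add_le ((∑ m ∈ Finset.Icc 1 ⌊r⌋₊, c 1 (r/m))
            - ∑ m ∈ Finset.Icc 1 ⌊r⌋₊, r/(m:ℝ))
            ((∑ m ∈ Finset.Icc 1 ⌊r⌋₊, r/(m:ℝ)) - r * Real.log r)
          simpa using this
      _ ≤ ((Finset.Icc 1 ⌊r⌋₊).card : ℝ) * 1 + r := by
          apply add_le_add _ h2
          calc |∑ m ∈ Finset.Icc 1 ⌊r⌋₊, (c 1 (r/m) - r/m)|
              ≤ ∑ m ∈ Finset.Icc 1 ⌊r⌋₊, |c 1 (r/m) - r/m| := Finset.abs_sum_le_sum_abs _ _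
            _ ≤ ∑ m ∈ Finset.Icc 1 ⌊r⌋₊, 1 := Finset.sum_le_sum h1
            _ = ((Finset.Icc 1 ⌊r⌋₊).card : ℝ) * 1 := by rw [Finset.sum_const]; simp
      _ ≤ 2 * r := by rw [mul_one]; linarith
  | succ q hq ih =>
    obtain ⟨C, hC, hest⟩ := ih
    refine ⟨C + 1, by linarith, fun r hr => ?_⟩
    have hL0 : 0 ≤ Real.log r := Real.log_nonneg hr
    set L := Real.log r with hLdef
    have hq1 : (q:ℝ) + 1 ≠ 0 := by positivity
    have hfac : (0:ℝ) < (q.factorial : ℝ) := by exact_mod_cast q.factorial_pos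
    have hkey := key_sum_bounds q r hr
    -- split
    have hsplit : c (q+1+1) r - r * L^(q+1) / ((q+1).factorial : ℝ)
        = (∑ m ∈ Finset.Icc 1 ⌊r⌋₊,
            (c (q+1) (r/m) - (r/m) * (Real.log (r/m))^q / (q.factorial : ℝ)))
          + (r / (q.factorial : ℝ))
            * ((∑ m ∈ Finset.Icc 1 ⌊r⌋₊, (L - Real.log m)^q / m) - L^(q+1)/((q:ℝ)+1)) := by
      rw [c_rec, Finset.sum_sub_distrib]
      have h1 : ∑ m ∈ Finset.Icc 1 ⌊r⌋₊, (r/m) * (Real.log (r/m))^q / (q.factorial : ℝ)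
          = (r / (q.factorial : ℝ)) * ∑ m ∈ Finset.Icc 1 ⌊r⌋₊, (L - Real.log m)^q / m := by
        rw [Finset.mul_sum]
        apply Finset.sum_congr rfl
        intro m hm
        obtain ⟨hm0, hmr, hdiv, hlogeq, -⟩ := mem_facts hr hm
        have hmne : (m:ℝ) ≠ 0 := ne_of_gt hm0
        have hfne : (q.factorial : ℝ) ≠ 0 := ne_of_gt hfac
        rw [hlogeq]
        field_simp
        rfl
      have h2 : r * L^(q+1) / ((q+1).factorial : ℝ)
          = (r / (q.factorial : ℝ)) * (L^(q+1)/((q:ℝ)+1)) := by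
        have hfne : (q.factorial : ℝ) ≠ 0 := ne_of_gt hfac
        rw [Nat.factorial_succ]
        push_cast
        field_simp
      rw [h1, h2]
      ring
    rw [hsplit]
    have hterm1 : |∑ m ∈ Finset.Icc 1 ⌊r⌋₊,
        (c (q+1) (r/m) - (r/m) * (Real.log (r/m))^q / (q.factorial : ℝ))|
        ≤ C * r * (1 + L)^q := by
      calc |∑ m ∈ Finset.Icc 1 ⌊r⌋₊,
            (c (q+1) (r/m) - (r/m) * (Real.log (r/m))^q / (q.factorial : ℝ))|
          ≤ ∑ m ∈ Finset.Icc 1 ⌊r⌋₊,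
              |c (q+1) (r/m) - (r/m) * (Real.log (r/m))^q / (q.factorial : ℝ)| :=
            Finset.abs_sum_le_sum_abs _ _
        _ ≤ ∑ m ∈ Finset.Icc 1 ⌊r⌋₊, C * (r/m) * (1 + L)^(q-1) := by
            apply Finset.sum_le_sum
            intro m hm
            obtain ⟨hm0, hmr, hdiv, hlogeq, hle, hnn⟩ := mem_facts hr hm
            calc |c (q+1) (r/m) - (r/m) * (Real.log (r/m))^q / (q.factorial : ℝ)|
                ≤ C * (r/m) * (1 + Real.log (r/m))^(q-1) := hest (r/m) hdiv
              _ ≤ C * (r/m) * (1 + L)^(q-1) := by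
                  apply mul_le_mul_of_nonneg_left _ (by positivity)
                  exact pow_le_pow_left₀ (by linarith) (by linarith) _
        _ = C * r * (1 + L)^(q-1) * ∑ m ∈ Finset.Icc 1 ⌊r⌋₊, 1/(m:ℝ) := by
            rw [Finset.mul_sum]
            apply Finset.sum_congr rfl
            intro m hm
            ring
        _ ≤ C * r * (1 + L)^(q-1) * (1 + L) :=
            mul_le_mul_of_nonneg_left (harmonic_bounds r hr).2 (by positivity)
        _ = C * r * ((1 + L)^(q-1) * (1 + L)) := by ring
        _ = C * r * (1 + L)^q := by
            rw [← pow_succ]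
            congr 2
            omega
    have hterm2 : |(r / (q.factorial : ℝ))
        * ((∑ m ∈ Finset.Icc 1 ⌊r⌋₊, (L - Real.log m)^q / m) - L^(q+1)/((q:ℝ)+1))|
        ≤ r * (1 + L)^q := by
      rw [abs_mul]
      have hr0 : (0:ℝ) ≤ r / (q.factorial : ℝ) := by positivity
      rw [abs_of_nonneg hr0]
      have habs : |(∑ m ∈ Finset.Icc 1 ⌊r⌋₊, (L - Real.log m)^q / m) - L^(q+1)/((q:ℝ)+1)|
          ≤ L^q := by
        rw [abs_le]
        have h1 := hkey.1
        have h2 := hkey.2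
        push_cast at h1 h2
        constructor <;> linarith
      calc (r / (q.factorial : ℝ))
            * |(∑ m ∈ Finset.Icc 1 ⌊r⌋₊, (L - Real.log m)^q / m) - L^(q+1)/((q:ℝ)+1)|
          ≤ (r / (q.factorial : ℝ)) * L^q := mul_le_mul_of_nonneg_left habs hr0
        _ ≤ r * L^q := by
            apply mul_le_mul_of_nonneg_right _ (by positivity)
            have hfac1 : (1:ℝ) ≤ (q.factorial : ℝ) := by
              exact_mod_cast Nat.one_le_iff_ne_zero.mpr q.factorial_ne_zero
            exact div_le_self (by linarith) hfac1
        _ ≤ r * (1 + L)^q := by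
            apply mul_le_mul_of_nonneg_left _ (by linarith)
            exact pow_le_pow_left₀ hL0 (by linarith) q
    calc |(∑ m ∈ Finset.Icc 1 ⌊r⌋₊,
            (c (q+1) (r/m) - (r/m) * (Real.log (r/m))^q / (q.factorial : ℝ)))
          + (r / (q.factorial : ℝ))
            * ((∑ m ∈ Finset.Icc 1 ⌊r⌋₊, (L - Real.log m)^q / m) - L^(q+1)/((q:ℝ)+1))|
        ≤ C * r * (1 + L)^q + r * (1 + L)^q := le_trans (abs_add_le _ _)
          (add_le_add hterm1 hterm2)
      _ = (C + 1) * r * (1 + L)^q := by ring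
      _ = (C + 1) * r * (1 + L)^(q + 1 - 1) := by norm_num

end CardDstar

namespace CardDstar

lemma tendsto_aux (k : ℕ) (C : ℝ) :
    Tendsto (fun r : ℝ => C * (1 + Real.log r)^k / (Real.log r)^(k+1)) atTop (nhds 0) := by
  have hx : Tendsto (fun x : ℝ => C * (1 + x)^k / x^(k+1)) atTop (nhds 0) := by
    have h1 : Tendsto (fun x : ℝ => (C/x) * ((1 + x)/x)^k) atTop (nhds 0) := by
      have hc : Tendsto (fun x : ℝ => C/x) atTop (nhds 0) := by
        simpa [div_eq_mul_inv] using tendsto_inv_atTop_zero.const_mul C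
      have hd : Tendsto (fun x : ℝ => ((1 + x)/x)^k) atTop (nhds 1) := by
        have : Tendsto (fun x : ℝ => (1 + x)/x) atTop (nhds 1) := by
          have h2 : Tendsto (fun x : ℝ => x⁻¹ + 1) atTop (nhds (0 + 1)) :=
            (tendsto_inv_atTop_zero (𝕜 := ℝ)).add tendsto_const_nhds
          rw [zero_add] at h2
          apply h2.congr'
          filter_upwards [eventually_gt_atTop (0:ℝ)] with x hx
          field_simp
        simpa using this.pow k
      have := hc.mul hd
      simpa using this
    apply h1.congr'
    filter_upwards [eventually_gt_atTop (0:ℝ)] with x hx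
    rw [div_pow, pow_succ]
    field_simp
  exact hx.comp Real.tendsto_log_atTop

lemma c_asymp (q : ℕ) :
    Tendsto (fun r : ℝ => c (q+1) r * (q.factorial : ℝ) / (r * (Real.log r)^q))
      atTop (nhds 1) := by
  rcases Nat.eq_zero_or_pos q with rfl | hq
  · simp only [Nat.factorial_zero, Nat.cast_one, mul_one, pow_zero]
    have := tendsto_nat_floor_div_atTop (R := ℝ)
    apply this.congr'
    filter_upwards [eventually_ge_atTop (1:ℝ)] with r hr
    rw [c_one]
  · obtain ⟨C, hC, hest⟩ := est q hq
    have hdiff : Tendsto (fun r : ℝ =>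
        c (q+1) r * (q.factorial : ℝ) / (r * (Real.log r)^q) - 1) atTop (nhds 0) := by
      apply squeeze_zero_norm'
        (a := fun r => (C * (q.factorial : ℝ)) * (1 + Real.log r)^(q-1) / (Real.log r)^(q-1+1))
      · filter_upwards [eventually_ge_atTop (2:ℝ)] with r hr
        have hr1 : (1:ℝ) ≤ r := by linarith
        have hL : 0 < Real.log r :=
          Real.log_pos (by linarith)
        have hr0 : 0 < r := by linarith
        have hfac : (0:ℝ) < (q.factorial : ℝ) := by exact_mod_cast q.factorial_pos
        have hden : 0 < r * (Real.log r)^q := by positivity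
        have heq : c (q+1) r * (q.factorial : ℝ) / (r * (Real.log r)^q) - 1
            = (c (q+1) r - r * (Real.log r)^q / (q.factorial : ℝ))
              * ((q.factorial : ℝ) / (r * (Real.log r)^q)) := by
          field_simp
        rw [Real.norm_eq_abs, heq, abs_mul, abs_of_nonneg (by positivity :
          (0:ℝ) ≤ (q.factorial : ℝ) / (r * (Real.log r)^q))]
        calc |c (q+1) r - r * (Real.log r)^q / (q.factorial : ℝ)|
              * ((q.factorial : ℝ) / (r * (Real.log r)^q))
            ≤ (C * r * (1 + Real.log r)^(q-1))
              * ((q.factorial : ℝ) / (r * (Real.log r)^q)) := by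
              apply mul_le_mul_of_nonneg_right (hest r hr1) (by positivity)
          _ = (C * (q.factorial : ℝ)) * (1 + Real.log r)^(q-1) / (Real.log r)^(q-1+1) := by
              rw [show q - 1 + 1 = q from by omega]
              field_simp
      · exact tendsto_aux (q-1) (C * (q.factorial : ℝ))
    have := hdiff.add (tendsto_const_nhds (x := (1:ℝ)))
    simpa using this

lemma bad_asymp (q : ℕ) :
    Tendsto (fun r : ℝ =>
      ((((D (q+1) ⌊r⌋₊).filter fun i => ¬ Function.Injective i).card : ℝ)
        * (q.factorial : ℝ)) / (r * (Real.log r)^q)) atTop (nhds 0) := by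
  rcases Nat.eq_zero_or_pos q with rfl | hq
  · apply squeeze_zero_norm' (a := fun r : ℝ => 1 / r)
    · filter_upwards [eventually_ge_atTop (1:ℝ)] with r hr
      have hr0 : (0:ℝ) < r := by linarith
      have hN : 1 ≤ ⌊r⌋₊ := Nat.le_floor (by exact_mod_cast hr)
      have hb := card_not_injective_le 0 ⌊r⌋₊
      rw [card_D_zero hN] at hb
      simp only [pow_zero, mul_one, one_pow, one_mul] at hb ⊢
      have hble : ((((D 1 ⌊r⌋₊).filter fun i => ¬ Function.Injective i).card : ℝ)) ≤ 1 := by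
        exact_mod_cast hb
      rw [Real.norm_eq_abs, Nat.factorial_zero, Nat.cast_one, mul_one, abs_div,
        abs_of_nonneg (by positivity : (0:ℝ) ≤ ((((D 1 ⌊r⌋₊).filter
          fun i => ¬ Function.Injective i).card : ℝ))), abs_of_nonneg (le_of_lt hr0)]
      exact (div_le_div_iff_of_pos_right hr0).mpr hble
    · simpa [one_div] using tendsto_inv_atTop_zero (𝕜 := ℝ)
  · apply squeeze_zero_norm'
      (a := fun r => (((q:ℝ)+1)^2 * (q.factorial : ℝ)) * (1 + Real.log r)^(q-1)
        / (Real.log r)^(q-1+1))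
    · filter_upwards [eventually_ge_atTop (2:ℝ)] with r hr
      have hr1 : (1:ℝ) ≤ r := by linarith
      have hL : 0 < Real.log r := Real.log_pos (by linarith)
      have hr0 : 0 < r := by linarith
      have hb := card_not_injective_le q ⌊r⌋₊
      have hcrude : ((D q ⌊r⌋₊).card : ℝ) ≤ r * (1 + Real.log r)^(q-1) := by
        have := c_crude (q-1) r hr1
        rw [show q - 1 + 1 = q from by omega] at this
        exact this
      have hcast : ((((D (q+1) ⌊r⌋₊).filter fun i => ¬ Function.Injective i).card : ℝ))
          ≤ ((q:ℝ)+1)^2 * (r * (1 + Real.log r)^(q-1)) := by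
        calc ((((D (q+1) ⌊r⌋₊).filter fun i => ¬ Function.Injective i).card : ℝ))
            ≤ (((q+1)^2 * (D q ⌊r⌋₊).card : ℕ) : ℝ) := by exact_mod_cast hb
          _ = ((q:ℝ)+1)^2 * ((D q ⌊r⌋₊).card : ℝ) := by push_cast; ring
          _ ≤ ((q:ℝ)+1)^2 * (r * (1 + Real.log r)^(q-1)) := by
              apply mul_le_mul_of_nonneg_left hcrude (by positivity)
      rw [Real.norm_eq_abs, abs_div, abs_of_nonneg (by positivity :
        (0:ℝ) ≤ ((((D (q+1) ⌊r⌋₊).filter fun i => ¬ Function.Injective i).card : ℝ))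
          * (q.factorial : ℝ)), abs_of_nonneg (by positivity : (0:ℝ) ≤ r * (Real.log r)^q)]
      rw [show q - 1 + 1 = q from by omega]
      rw [div_le_div_iff₀ (by positivity) (by positivity)]
      have hfac : (0:ℝ) < (q.factorial : ℝ) := by exact_mod_cast q.factorial_pos
      calc ((((D (q+1) ⌊r⌋₊).filter fun i => ¬ Function.Injective i).card : ℝ))
            * (q.factorial : ℝ) * (Real.log r)^q
          ≤ (((q:ℝ)+1)^2 * (r * (1 + Real.log r)^(q-1))) * (q.factorial : ℝ)
            * (Real.log r)^q := by
            apply mul_le_mul_of_nonneg_right _ (by positivity)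
            exact mul_le_mul_of_nonneg_right hcast (le_of_lt hfac)
        _ = ((q:ℝ)+1)^2 * (q.factorial : ℝ) * (1 + Real.log r)^(q-1)
            * (r * (Real.log r)^q) := by ring
    · exact tendsto_aux (q-1) (((q:ℝ)+1)^2 * (q.factorial : ℝ))

end CardDstar

/-- The cardinality of `𝒟_p^*(r) = {i ∈ ℕ^p : 0 < i₁ < ⋯ < i_p, i₁⋯i_p ≤ r}`
is asymptotically `r (log r)^(p-1) / (p! (p-1)!)` as `r → ∞`. -/
theorem card_Dstar_asymp (p : ℕ) (hp : 1 ≤ p) :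
    Tendsto
      (fun r : ℝ =>
        ((Nat.card {i : Fin p → ℕ // StrictMono i ∧ (∀ j, 0 < i j) ∧
            (∏ j, (i j : ℝ)) ≤ r} : ℝ) * (Nat.factorial p) * (Nat.factorial (p - 1)))
          / (r * (Real.log r) ^ (p - 1)))
      atTop (nhds 1) := by
  classical
  obtain ⟨q, rfl⟩ : ∃ q, p = q + 1 := ⟨p - 1, by omega⟩
  simp only [Nat.add_sub_cancel]
  have hmain := (CardDstar.c_asymp q).sub (CardDstar.bad_asymp q)
  rw [sub_zero] at hmain
  apply hmain.congr'
  filter_upwards [eventually_ge_atTop (1:ℝ)] with r hr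
  have hr0 : (0:ℝ) ≤ r := by linarith
  have hset : {i : Fin (q+1) → ℕ | StrictMono i ∧ (∀ j, 0 < i j) ∧ (∏ j, (i j:ℝ)) ≤ r}
      = ↑(CardDstar.Dstrict (q+1) ⌊r⌋₊) := by
    ext i
    simp only [Set.mem_setOf_eq, CardDstar.Dstrict, Finset.mem_coe,
      Finset.mem_filter, CardDstar.mem_D]
    constructor
    · rintro ⟨hs, hpos, hprod⟩
      refine ⟨⟨hpos, ?_⟩, hs⟩
      rw [Nat.le_floor_iff hr0]
      push_cast
      exact hprod
    · rintro ⟨⟨hpos, hprod⟩, hs⟩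
      refine ⟨hs, hpos, ?_⟩
      rw [Nat.le_floor_iff hr0] at hprod
      push_cast at hprod
      exact hprod
  have hcard : (Nat.card {i : Fin (q+1) → ℕ // StrictMono i ∧ (∀ j, 0 < i j) ∧
      (∏ j, (i j : ℝ)) ≤ r}) = (CardDstar.Dstrict (q+1) ⌊r⌋₊).card := by
    have h1 : (Nat.card {i : Fin (q+1) → ℕ // StrictMono i ∧ (∀ j, 0 < i j) ∧
        (∏ j, (i j : ℝ)) ≤ r})
        = ({i : Fin (q+1) → ℕ | StrictMono i ∧ (∀ j, 0 < i j) ∧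
            (∏ j, (i j:ℝ)) ≤ r} : Set _).ncard := Nat.card_coe_set_eq _
    rw [h1, hset, Set.ncard_coe_finset]
  have hDinj : ((CardDstar.Dinj (q+1) ⌊r⌋₊).card : ℝ)
      = ((q+1).factorial : ℝ) * ((CardDstar.Dstrict (q+1) ⌊r⌋₊).card : ℝ) := by
    exact_mod_cast congrArg (fun n : ℕ => (n : ℝ)) (CardDstar.card_Dinj (q+1) ⌊r⌋₊)
  have hsplitcard : ((CardDstar.Dinj (q+1) ⌊r⌋₊).card : ℝ)
      + ((((CardDstar.D (q+1) ⌊r⌋₊).filter fun i => ¬ Function.Injective i).card : ℝ))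
      = CardDstar.c (q+1) r := by
    rw [CardDstar.c]
    have := Finset.card_filter_add_card_filter_not
      (s := CardDstar.D (q+1) ⌊r⌋₊) (p := fun i => Function.Injective i)
    have h2 : (CardDstar.Dinj (q+1) ⌊r⌋₊).card
        + ((CardDstar.D (q+1) ⌊r⌋₊).filter fun i => ¬ Function.Injective i).card
        = (CardDstar.D (q+1) ⌊r⌋₊).card := by
      rw [CardDstar.Dinj]
      convert this using 3
    exact_mod_cast h2
  rw [hcard]
  have hnum : CardDstar.c (q+1) r * (q.factorial : ℝ)
      - ((((CardDstar.D (q+1) ⌊r⌋₊).filter fun i => ¬ Function.Injective i).card : ℝ))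
        * (q.factorial : ℝ)
      = ((CardDstar.Dstrict (q+1) ⌊r⌋₊).card : ℝ) * ((q+1).factorial : ℝ)
        * (q.factorial : ℝ) := by
    rw [← hsplitcard, hDinj]
    ring
  rw [div_sub_div_same, hnum]
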